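/- For m, n ≥ 3, the state complexity of Uₘ(a,b,c) ⊕ (Uₙ(a,b,c))ᴿ is exactly m·2ⁿ, where Uₖ(a,b,c) is the language of the k-state DFA with a acting as the cycle (0,…,k−1), b as the transposition (0,1), c sending k−1 to 0 and fixing other states, initial state 0 and final state k−1. -/

import Mathlib

namespace SCPaper

/-- Reversal of a language. -/
def rev {α : Type} (L : Language α) : Language α := {w | w.reverse ∈ L}

/-- Union of two languages. -/
def lunion {α : Type} (K L : Language α) : Language α := {w | w ∈ K ∨ w ∈ L}

/-- Intersection of two languages. -/
def linter {α : Type} (K L : Language α) : Language α := {w | w ∈ K ∧ w ∈ L}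

/-- Difference of two languages. -/
def ldiff {α : Type} (K L : Language α) : Language α := {w | w ∈ K ∧ w ∉ L}

/-- Symmetric difference of two languages. -/
def lsymm {α : Type} (K L : Language α) : Language α := lunion (ldiff K L) (ldiff L K)

/-- Sizes (numbers of states) of complete DFAs recognizing `L`. -/
def complexitySet {α : Type} (L : Language α) : Set ℕ :=
  {n | ∃ M : DFA α (Fin n), M.accepts = L}

/-- A language is regular if it is recognized by some finite DFA. -/
def Regular {α : Type} (L : Language α) : Prop := (complexitySet L).Nonempty

/-- State complexity: the number of states of a minimal DFA for `L`. -/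
noncomputable def sc {α : Type} (L : Language α) : ℕ := sInf (complexitySet L)

/-- The cyclic permutation (0,1,…,n−1). -/
def cyc (n : ℕ) (i : Fin n) : Fin n :=
  ⟨(i.val + 1) % n, Nat.mod_lt _ (Nat.lt_of_le_of_lt (Nat.zero_le _) i.isLt)⟩

/-- The transposition (0,1). -/
def tp01 (n : ℕ) (i : Fin n) : Fin n :=
  if i.val = 0 then ⟨1 % n, Nat.mod_lt _ (Nat.lt_of_le_of_lt (Nat.zero_le _) i.isLt)⟩
  else if i.val = 1 then ⟨0, Nat.lt_of_le_of_lt (Nat.zero_le _) i.isLt⟩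
  else i

/-- The singular map sending n−1 to 0 and fixing everything else. -/
def sing (n : ℕ) (i : Fin n) : Fin n :=
  if i.val = n - 1 then ⟨0, Nat.lt_of_le_of_lt (Nat.zero_le _) i.isLt⟩ else i

/-- The transposition (n−2, n−1). -/
def tpTop (n : ℕ) (i : Fin n) : Fin n :=
  if i.val = n - 1 then ⟨n - 2, by have := i.isLt; omega⟩
  else if i.val = n - 2 then ⟨n - 1, by have := i.isLt; omega⟩
  else i

/-- The singular map sending n−1 to n−2 and fixing everything else. -/
def singTop (n : ℕ) (i : Fin n) : Fin n :=
  if i.val = n - 1 then ⟨n - 2, by have := i.isLt; omega⟩ else i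

/-- 𝒰ₙ(a,b,∅): binary alphabet, a = cycle (0,…,n−1), b = transposition (0,1),
initial state 0, final state n−1. -/
def U2dfa (n : ℕ) (h : 0 < n) : DFA (Fin 2) (Fin n) where
  step := fun i x => if x = 0 then cyc n i else tp01 n i
  start := ⟨0, h⟩
  accept := {i | i.val = n - 1}

def U2 (n : ℕ) (h : 0 < n) : Language (Fin 2) := (U2dfa n h).accepts

/-- 𝒰ₙ(a,b,c): a = cycle, b = transposition (0,1), c = (n−1 ↦ 0). -/
def Udfa (n : ℕ) (h : 0 < n) : DFA (Fin 3) (Fin n) where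
  step := fun i x => if x = 0 then cyc n i else if x = 1 then tp01 n i else sing n i
  start := ⟨0, h⟩
  accept := {i | i.val = n - 1}

def U (n : ℕ) (h : 0 < n) : Language (Fin 3) := (Udfa n h).accepts

/-- 𝒰ₙ(a,b,c) with final state set {0}. -/
def U0dfa (n : ℕ) (h : 0 < n) : DFA (Fin 3) (Fin n) where
  step := fun i x => if x = 0 then cyc n i else if x = 1 then tp01 n i else sing n i
  start := ⟨0, h⟩
  accept := {i | i.val = 0}

def U0 (n : ℕ) (h : 0 < n) : Language (Fin 3) := (U0dfa n h).accepts

/-- 𝒰ₙ(a,b,c,d): a = cycle, b = transposition (0,1), c = (n−1 ↦ 0), d = identity. -/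
def U4dfa (n : ℕ) (h : 0 < n) : DFA (Fin 4) (Fin n) where
  step := fun i x =>
    if x = 0 then cyc n i else if x = 1 then tp01 n i else if x = 2 then sing n i else i
  start := ⟨0, h⟩
  accept := {i | i.val = n - 1}

def U4 (n : ℕ) (h : 0 < n) : Language (Fin 4) := (U4dfa n h).accepts

/-- 𝒰ₙ(d,c,b,a): d = cycle, c = transposition (0,1), b = (n−1 ↦ 0), a = identity. -/
def U4dcbaDfa (n : ℕ) (h : 0 < n) : DFA (Fin 4) (Fin n) where
  step := fun i x =>
    if x = 3 then cyc n i else if x = 2 then tp01 n i else if x = 1 then sing n i else i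
  start := ⟨0, h⟩
  accept := {i | i.val = n - 1}

def U4dcba (n : ℕ) (h : 0 < n) : Language (Fin 4) := (U4dcbaDfa n h).accepts

/-- 𝒱ₙ(a,b,c,d): a = cycle, b = transposition (n−2,n−1), c = (n−1 ↦ n−2), d = identity. -/
def Vdfa (n : ℕ) (h : 0 < n) : DFA (Fin 4) (Fin n) where
  step := fun i x =>
    if x = 0 then cyc n i else if x = 1 then tpTop n i else if x = 2 then singTop n i else i
  start := ⟨0, h⟩
  accept := {i | i.val = n - 1}

def V (n : ℕ) (h : 0 < n) : Language (Fin 4) := (Vdfa n h).accepts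

/-- 𝒱ₙ(d,c,b,a): d = cycle, c = transposition (n−2,n−1), b = (n−1 ↦ n−2), a = identity. -/
def VdcbaDfa (n : ℕ) (h : 0 < n) : DFA (Fin 4) (Fin n) where
  step := fun i x =>
    if x = 3 then cyc n i else if x = 2 then tpTop n i else if x = 1 then singTop n i else i
  start := ⟨0, h⟩
  accept := {i | i.val = n - 1}

def Vdcba (n : ℕ) (h : 0 < n) : Language (Fin 4) := (VdcbaDfa n h).accepts

/-- Direct product of two DFAs with a chosen set of final states. -/
def prodDFA {α σ₁ σ₂ : Type} (M : DFA α σ₁) (N : DFA α σ₂) (acc : Set (σ₁ × σ₂)) :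
    DFA α (σ₁ × σ₂) where
  step := fun p x => (M.step p.1 x, N.step p.2 x)
  start := (M.start, N.start)
  accept := acc


/-- Chinese-remainder style pairing k ↦ (k mod m, k mod n). -/
def toPair (m n : ℕ) (hm : 0 < m) (hn : 0 < n) (k : Fin (m * n)) : Fin m × Fin n :=
  (⟨k.val % m, Nat.mod_lt _ hm⟩, ⟨k.val % n, Nat.mod_lt _ hn⟩)

/-- Componentwise successor on the product of two cyclic automata. -/
def prodSucc (m n : ℕ) (p : Fin m × Fin n) : Fin m × Fin n := (cyc m p.1, cyc n p.2)

/-- One-letter subset transition of the reversed NFA of 𝒰ₙ(a,b,c). -/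
def rstep (n : ℕ) (h : 0 < n) (S : Set (Fin n)) (x : Fin 3) : Set (Fin n) :=
  {q | (Udfa n h).step q x ∈ S}

/-- Action of a word on subsets in the reversed NFA of 𝒰ₙ(a,b,c). -/
def rword (n : ℕ) (h : 0 < n) (S : Set (Fin n)) (w : List (Fin 3)) : Set (Fin n) :=
  w.foldl (rstep n h) S

end SCPaper

open SCPaper

open SCPaper

open scoped Fin.NatCast Fin.IntCast Fin.CommRing

namespace SCProof
open SCPaper

variable {m n : ℕ}

/-- Product of 𝒰ₘ with the subset automaton of the reversal of 𝒰ₙ,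
accepting the symmetric difference. -/
def PD (m n : ℕ) (hm : 0 < m) (hn : 0 < n) : DFA (Fin 3) (Fin m × (Fin n → Bool)) where
  step := fun p x => ((Udfa m hm).step p.1 x, fun q => p.2 ((Udfa n hn).step q x))
  start := (⟨0, hm⟩, fun q => decide (q.val = n - 1))
  accept := {p | (p.1.val = m - 1) ≠ (p.2 ⟨0, hn⟩ = true)}

lemma PD_evalFrom (hm : 0 < m) (hn : 0 < n) (w : List (Fin 3)) (i : Fin m) (f : Fin n → Bool) :
    (PD m n hm hn).evalFrom (i, f) w =
      ((Udfa m hm).evalFrom i w, fun q => f ((Udfa n hn).evalFrom q w.reverse)) := by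
  induction w generalizing i f with
  | nil => simp [DFA.evalFrom]
  | cons x w ih =>
    show (PD m n hm hn).evalFrom ((PD m n hm hn).step (i, f) x) w = _
    rw [show (PD m n hm hn).step (i, f) x
        = ((Udfa m hm).step i x, fun q => f ((Udfa n hn).step q x)) from rfl, ih]
    refine Prod.ext rfl ?_
    funext q
    show f ((Udfa n hn).step ((Udfa n hn).evalFrom q w.reverse) x)
        = f ((Udfa n hn).evalFrom q (x :: w).reverse)
    rw [show (x :: w).reverse = w.reverse ++ [x] from by simp, DFA.evalFrom_of_append]
    rfl

lemma mem_U_iff (hm : 0 < m) (w : List (Fin 3)) :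
    w ∈ U m hm ↔ ((Udfa m hm).eval w).val = m - 1 := by
  rw [U, DFA.mem_accepts]; rfl

lemma PD_accepts (hm : 0 < m) (hn : 0 < n) :
    (PD m n hm hn).accepts = lsymm (U m hm) (rev (U n hn)) := by
  ext w
  rw [DFA.mem_accepts]
  show (PD m n hm hn).evalFrom (PD m n hm hn).start w ∈ (PD m n hm hn).accept ↔ _
  rw [show (PD m n hm hn).start = ((⟨0, hm⟩ : Fin m), fun q : Fin n => decide (q.val = n - 1))
      from rfl, PD_evalFrom]
  have h1 : w ∈ U m hm ↔ ((Udfa m hm).evalFrom ⟨0, hm⟩ w).val = m - 1 := mem_U_iff hm w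
  have h2 : w ∈ rev (U n hn) ↔ ((Udfa n hn).evalFrom ⟨0, hn⟩ w.reverse).val = n - 1 := by
    rw [rev]; change w.reverse ∈ U n hn ↔ _; rw [mem_U_iff hn]; rfl
  show (((Udfa m hm).evalFrom ⟨0, hm⟩ w).val = m - 1)
      ≠ (decide (((Udfa n hn).evalFrom ⟨0, hn⟩ w.reverse).val = n - 1) = true) ↔ _
  rw [decide_eq_true_eq]
  rw [lsymm, lunion, ldiff, ldiff]
  change _ ↔ (w ∈ U m hm ∧ w ∉ rev (U n hn)) ∨ (w ∈ rev (U n hn) ∧ w ∉ U m hm)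
  rw [← h1, ← h2] at *
  constructor
  · intro hne
    by_cases hK : w ∈ U m hm <;> by_cases hL : w ∈ rev (U n hn)
    · exact absurd (by rw [eq_iff_iff]; tauto) hne
    · tauto
    · tauto
    · exact absurd (by rw [eq_iff_iff]; tauto) hne
  · rintro (⟨h3, h4⟩ | ⟨h3, h4⟩) <;>
    · rw [ne_eq, eq_iff_iff]; tauto

/-- Transport a DFA along an equivalence of state types. -/
def mapDFA {α σ τ : Type} (e : σ ≃ τ) (M : DFA α σ) : DFA α τ where
  step := fun t x => e (M.step (e.symm t) x)
  start := e M.start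
  accept := e.symm ⁻¹' M.accept

lemma mapDFA_evalFrom {α σ τ : Type} (e : σ ≃ τ) (M : DFA α σ) (s : σ) (w : List α) :
    (mapDFA e M).evalFrom (e s) w = e (M.evalFrom s w) := by
  induction w generalizing s with
  | nil => rfl
  | cons x w ih =>
    show (mapDFA e M).evalFrom ((mapDFA e M).step (e s) x) w = _
    rw [show (mapDFA e M).step (e s) x = e (M.step (e.symm (e s)) x) from rfl, Equiv.symm_apply_apply,
      ih]
    rfl

lemma mapDFA_accepts {α σ τ : Type} (e : σ ≃ τ) (M : DFA α σ) :
    (mapDFA e M).accepts = M.accepts := by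
  ext w
  rw [DFA.mem_accepts, DFA.mem_accepts]
  show (mapDFA e M).evalFrom (e M.start) w ∈ e.symm ⁻¹' M.accept ↔ _
  rw [mapDFA_evalFrom, Set.mem_preimage, Equiv.symm_apply_apply]
  rfl

lemma card_mem_complexitySet {α : Type} {σ : Type} [Fintype σ] (M : DFA α σ) :
    Fintype.card σ ∈ complexitySet M.accepts := by
  refine ⟨mapDFA (Fintype.equivFinOfCardEq rfl) M, ?_⟩
  exact mapDFA_accepts _ _

end SCProof
namespace SCProof
open SCPaper

variable {m n : ℕ}

def wA (p : ℕ) : List (Fin 3) := List.replicate p 0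
def wB (p p' : ℕ) : List (Fin 3) := wA p ++ 1 :: wA p'
def wC (p p' : ℕ) : List (Fin 3) := wA p ++ 2 :: wA p'

section Ops

variable [NeZero m] [NeZero n]

lemma castFin_val (a : ℕ) : (↑a : Fin m).val = a % m := Fin.val_natCast a m

lemma castFin_eq_of_modEq {a b : ℕ} (h : a ≡ b [MOD m]) : (↑a : Fin m) = ↑b :=
  Fin.ext (by rw [castFin_val, castFin_val]; exact h)

lemma fone_val (hm2 : 2 ≤ m) : (1 : Fin m).val = 1 := by
  rw [show (1 : Fin m) = ((1:ℕ) : Fin m) from (Nat.cast_one).symm, castFin_val]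
  exact Nat.mod_eq_of_lt (by omega)

lemma fne01 (hm2 : 2 ≤ m) : (0 : Fin m) ≠ 1 := by
  intro h
  have := congrArg Fin.val h
  rw [fone_val hm2] at this
  exact absurd this (by simp)

lemma cyc_eq (hm2 : 2 ≤ m) (i : Fin m) : cyc m i = i + 1 := by
  apply Fin.ext
  rw [cyc, Fin.add_def, fone_val hm2]

lemma tp01_char (hm2 : 2 ≤ m) (i : Fin m) :
    tp01 m i = if i = 0 then 1 else if i = 1 then 0 else i := by
  rw [tp01]
  by_cases e0 : i = 0
  · rw [if_pos (by rw [e0]; rfl : i.val = 0), if_pos e0]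
    exact Fin.ext (by rw [fone_val hm2]; exact Nat.mod_eq_of_lt (by omega))
  · have v0 : ¬ i.val = 0 := fun h => e0 (Fin.ext h)
    rw [if_neg v0, if_neg e0]
    by_cases e1 : i = 1
    · rw [if_pos (by rw [e1]; exact fone_val hm2), if_pos e1]
      exact Fin.ext rfl
    · have v1 : ¬ i.val = 1 := fun h => e1 (Fin.ext (by rw [h, fone_val hm2]))
      rw [if_neg v1, if_neg e1]

lemma tp01_invol (hm2 : 2 ≤ m) (i : Fin m) : tp01 m (tp01 m i) = i := by
  rw [tp01_char hm2, tp01_char hm2]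
  by_cases e0 : i = 0
  · simp [e0, fne01 hm2, (fne01 hm2).symm]
  · by_cases e1 : i = 1
    · simp [e0, e1, fne01 hm2]
    · simp [e0, e1]

lemma castLast_val (hm1 : 1 ≤ m) : ((↑(m-1) : Fin m)).val = m - 1 := by
  rw [castFin_val]; exact Nat.mod_eq_of_lt (by omega)

lemma sing_char (hm1 : 1 ≤ m) (i : Fin m) :
    sing m i = if i = (↑(m-1) : Fin m) then 0 else i := by
  rw [sing]
  by_cases e : i = (↑(m-1) : Fin m)
  · rw [if_pos (by rw [e]; exact castLast_val hm1), if_pos e]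
    exact Fin.ext rfl
  · have : ¬ i.val = m - 1 := fun h => e (Fin.ext (by rw [h, castLast_val hm1]))
    rw [if_neg this, if_neg e]

lemma sing_of_ne (hm1 : 1 ≤ m) {i : Fin m} (h : i ≠ ↑(m-1)) : sing m i = i := by
  rw [sing_char hm1, if_neg h]

lemma sing_last (hm1 : 1 ≤ m) : sing m (↑(m-1) : Fin m) = 0 := by
  rw [sing_char hm1, if_pos rfl]

lemma castLast_add_one (hm1 : 1 ≤ m) : (↑(m-1) : Fin m) + 1 = 0 := by
  rw [show ((↑(m-1) : Fin m) + 1) = ↑((m-1) + 1) from by push_cast; ring,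
    show m - 1 + 1 = m from by omega]
  exact Fin.natCast_self m

lemma castLast_eq_neg_one (hm1 : 1 ≤ m) : (↑(m-1) : Fin m) = -1 :=
  eq_neg_of_add_eq_zero_left (castLast_add_one hm1)

def swapAt (x : Fin n) (f : Fin n → Bool) : Fin n → Bool :=
  fun q => if q = x then f (x+1) else if q = x+1 then f x else f q

def copyAt (x : Fin n) (f : Fin n → Bool) : Fin n → Bool :=
  fun q => if q = x - 1 then f x else f q

/-- Reachability in the product automaton. -/
def Reach (i : Fin m) (f : Fin n → Bool) : Prop :=
  ∃ w, (PD m n (NeZero.pos m) (NeZero.pos n)).eval w = (i, f)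

lemma reach_start : Reach (⟨0, NeZero.pos m⟩ : Fin m) (fun q : Fin n => decide (q.val = n-1)) :=
  ⟨[], rfl⟩

lemma reach_of_evalFrom {i : Fin m} {f : Fin n → Bool} {i' : Fin m} {f' : Fin n → Bool}
    {w : List (Fin 3)} (h : Reach i f)
    (he : (PD m n (NeZero.pos m) (NeZero.pos n)).evalFrom (i, f) w = (i', f')) :
    Reach i' f' := by
  obtain ⟨u, hu⟩ := h
  exact ⟨u ++ w, by rw [DFA.eval, DFA.evalFrom_of_append]; rw [DFA.eval] at hu; rw [hu, he]⟩

lemma step_a (hm2 : 2 ≤ m) (hn2 : 2 ≤ n) (i : Fin m) (f : Fin n → Bool) :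
    (PD m n (NeZero.pos m) (NeZero.pos n)).step (i, f) 0 = (i + 1, fun q => f (q + 1)) := by
  show (cyc m i, fun q => f (cyc n q)) = _
  rw [cyc_eq hm2]
  refine Prod.ext rfl ?_
  funext q
  show f (cyc n q) = _
  rw [cyc_eq hn2]

lemma step_b (i : Fin m) (f : Fin n → Bool) :
    (PD m n (NeZero.pos m) (NeZero.pos n)).step (i, f) 1 = (tp01 m i, fun q => f (tp01 n q)) := rfl

lemma step_c (i : Fin m) (f : Fin n → Bool) :
    (PD m n (NeZero.pos m) (NeZero.pos n)).step (i, f) 2 = (sing m i, fun q => f (sing n q)) := rfl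

lemma evalFrom_wA (hm2 : 2 ≤ m) (hn2 : 2 ≤ n) (p : ℕ) (i : Fin m) (f : Fin n → Bool) :
    (PD m n (NeZero.pos m) (NeZero.pos n)).evalFrom (i, f) (wA p)
      = (i + ↑p, fun q => f (q + ↑p)) := by
  induction p generalizing i f with
  | zero => simp [wA, DFA.evalFrom]
  | succ p ih =>
    show (PD m n _ _).evalFrom ((PD m n _ _).step (i, f) 0) (wA p) = _
    rw [step_a hm2 hn2, ih]
    have hcm : (↑(p+1) : Fin m) = ↑p + 1 := by push_cast; ring
    have hcn : (↑(p+1) : Fin n) = ↑p + 1 := by push_cast; ring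
    refine Prod.ext ?_ ?_
    · show i + 1 + ↑p = i + ↑(p+1)
      rw [hcm]; ring
    · funext q
      show f (q + ↑p + 1) = f (q + ↑(p+1))
      rw [hcn, ← add_assoc]

lemma evalFrom_wB (hm2 : 2 ≤ m) (hn2 : 2 ≤ n) (p p' : ℕ) (i : Fin m) (f : Fin n → Bool) :
    (PD m n (NeZero.pos m) (NeZero.pos n)).evalFrom (i, f) (wB p p')
      = (tp01 m (i + ↑p) + ↑p', fun q => f (tp01 n (q + ↑p') + ↑p)) := by
  rw [wB, DFA.evalFrom_of_append, evalFrom_wA hm2 hn2]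
  show (PD m n _ _).evalFrom ((PD m n _ _).step _ 1) (wA p') = _
  rw [step_b, evalFrom_wA hm2 hn2]

lemma evalFrom_wC (hm2 : 2 ≤ m) (hn2 : 2 ≤ n) (p p' : ℕ) (i : Fin m) (f : Fin n → Bool) :
    (PD m n (NeZero.pos m) (NeZero.pos n)).evalFrom (i, f) (wC p p')
      = (sing m (i + ↑p) + ↑p', fun q => f (sing n (q + ↑p') + ↑p)) := by
  rw [wC, DFA.evalFrom_of_append, evalFrom_wA hm2 hn2]
  show (PD m n _ _).evalFrom ((PD m n _ _).step _ 2) (wA p') = _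
  rw [step_c, evalFrom_wA hm2 hn2]

lemma Reach.rot (hm2 : 2 ≤ m) (hn2 : 2 ≤ n) {i : Fin m} {f : Fin n → Bool}
    (h : Reach i f) (p : ℕ) : Reach (i + (p : Fin m)) (fun q => f (q + (p : Fin n))) :=
  reach_of_evalFrom h (evalFrom_wA hm2 hn2 p i f)

lemma neg_cast_eq {p p' : ℕ} (hd : n ∣ (p + p')) : (↑p' : Fin n) = -↑p := by
  refine eq_neg_of_add_eq_zero_right ?_
  rw [show (↑p + ↑p' : Fin n) = ↑(p + p') from by push_cast; ring]
  exact Fin.natCast_eq_zero.2 hd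

lemma Reach.swap (hm2 : 2 ≤ m) (hn3 : 3 ≤ n) {i : Fin m} {f : Fin n → Bool}
    (h : Reach i f) (p p' : ℕ) (hd : n ∣ (p + p')) :
    Reach (tp01 m (i + (p : Fin m)) + (p' : Fin m)) (swapAt (p : Fin n) f) := by
  refine reach_of_evalFrom (w := wB p p') h ?_
  rw [evalFrom_wB hm2 (by omega)]
  refine Prod.ext rfl ?_
  show (fun q => f (tp01 n (q + ↑p') + ↑p)) = swapAt (↑p : Fin n) f
  funext q
  have hp' : (↑p' : Fin n) = -↑p := neg_cast_eq hd
  have hq : q + (↑p' : Fin n) = q - ↑p := by rw [hp']; ring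
  rw [hq, tp01_char (by omega), swapAt]
  by_cases e0 : q = ↑p
  · rw [if_pos (by rw [e0]; exact sub_self _), if_pos e0, add_comm]
  · rw [if_neg (fun hz => e0 (by rw [← sub_add_cancel q (↑p : Fin n), hz, zero_add]))]
    by_cases e1 : q = ↑p + 1
    · rw [if_pos (by rw [e1]; ring), if_neg e0, if_pos e1, zero_add]
    · rw [if_neg (fun hz => e1 (by rw [← sub_add_cancel q (↑p : Fin n), hz, add_comm])),
        if_neg e0, if_neg e1, sub_add_cancel]

lemma Reach.copy (hm2 : 2 ≤ m) (hn3 : 3 ≤ n) {i : Fin m} {f : Fin n → Bool}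
    (h : Reach i f) (p p' : ℕ) (hd : n ∣ (p + p')) :
    Reach (sing m (i + (p : Fin m)) + (p' : Fin m)) (copyAt (p : Fin n) f) := by
  refine reach_of_evalFrom (w := wC p p') h ?_
  rw [evalFrom_wC hm2 (by omega)]
  refine Prod.ext rfl ?_
  show (fun q => f (sing n (q + ↑p') + ↑p)) = copyAt (↑p : Fin n) f
  funext q
  have hq : q + (↑p' : Fin n) = q - ↑p := by rw [neg_cast_eq hd]; ring
  rw [hq, sing_char (show 1 ≤ n by omega), castLast_eq_neg_one (show 1 ≤ n by omega), copyAt]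
  by_cases e0 : q = ↑p - 1
  · rw [if_pos (by rw [e0]; ring), if_pos e0, zero_add]
  · rw [if_neg (fun hz => e0 (by rw [← sub_add_cancel q (↑p : Fin n), hz]; ring)),
      if_neg e0, sub_add_cancel]

end Ops

end SCProof
namespace SCProof
open SCPaper

variable {m n : ℕ}

section Gadgets

variable [NeZero m] [NeZero n]

lemma natModEq_of_int {g a b : ℕ} (h : (a:ℤ) ≡ (b:ℤ) [ZMOD (g:ℤ)]) : a ≡ b [MOD g] := by
  rwa [Int.natCast_modEq_iff] at h

lemma crt_exists (a b : ℕ) (h : a ≡ b [MOD Nat.gcd m n]) :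
    ∃ k : ℕ, k ≡ a [MOD n] ∧ k ≡ b [MOD m] := by
  obtain ⟨k, hk⟩ := Nat.chineseRemainder' (n := n) (m := m) (a := a) (b := b)
    (by rwa [Nat.gcd_comm] at h)
  exact ⟨k, hk⟩

lemma swapAt_eq_self {f : Fin n → Bool} {x : Fin n} (h : f x = f (x+1)) : swapAt x f = f := by
  funext q
  rw [swapAt]
  by_cases e0 : q = x
  · rw [if_pos e0, e0, h]
  · by_cases e1 : q = x + 1
    · rw [if_neg e0, if_pos e1, e1, h]
    · rw [if_neg e0, if_neg e1]

lemma copyAt_eq_self {f : Fin n → Bool} {x : Fin n} (h : f (x - 1) = f x) : copyAt x f = f := by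
  funext q
  rw [copyAt]
  by_cases e0 : q = x - 1
  · rw [if_pos e0, e0, h]
  · rw [if_neg e0]

lemma reach_swapAll (hm3 : 3 ≤ m) (hn3 : 3 ≤ n) {f : Fin n → Bool} (x : Fin n) (h : ∀ i : Fin m, Reach i f) (i : Fin m) :
    Reach i (swapAt x f) := by
  have hdvd : n ∣ (x.val + (n - x.val)) := by
    have := x.isLt
    exact Dvd.intro 1 (by omega)
  have h2 := Reach.swap (i := tp01 m (i - ((n - x.val : ℕ) : Fin m)) - (x.val : Fin m)) (f := f)
    (by omega) hn3 (h _) x.val (n - x.val) hdvd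
  rw [Fin.cast_val_eq_self] at h2
  rwa [sub_add_cancel, tp01_invol (by omega), sub_add_cancel] at h2

lemma reach_copyTok (hm3 : 3 ≤ m) (hn3 : 3 ≤ n) {f : Fin n → Bool} (h : ∀ i' : Fin m, Reach i' f) (i : Fin m) (p p' : ℕ)
    (hd : n ∣ (p + p')) (hcond : i - (p' : Fin m) ≠ ((m-1 : ℕ) : Fin m)) :
    Reach i (copyAt (p : Fin n) f) := by
  have h2 := Reach.copy (i := i - (p' : Fin m) - (p : Fin m)) (f := f) (by omega) hn3 (h _) p p' hd
  rwa [sub_add_cancel, sing_of_ne (by omega) hcond, sub_add_cancel] at h2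

lemma reach_fireC (hm3 : 3 ≤ m) (hn3 : 3 ≤ n) {j : Fin m} {f : Fin n → Bool} (hr : Reach j f) (p p' : ℕ)
    (hd : n ∣ (p + p')) (hpair : f ((p:Fin n) - 1) = f (p:Fin n))
    (hfire : j + (p:Fin m) = ((m-1:ℕ) : Fin m)) :
    Reach ((p' : Fin m)) f := by
  have h2 := hr.copy (by omega) hn3 p p' hd
  rwa [hfire, sing_last (by omega), zero_add, copyAt_eq_self hpair] at h2

lemma tp01_zero (hm2 : 2 ≤ m) : tp01 m (0 : Fin m) = 1 := by
  rw [tp01_char hm2, if_pos rfl]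

lemma tp01_one (hm2 : 2 ≤ m) : tp01 m (1 : Fin m) = 0 := by
  rw [tp01_char hm2, if_neg (fne01 hm2).symm, if_pos rfl]

lemma reach_fireB0 (hm3 : 3 ≤ m) (hn3 : 3 ≤ n) {j : Fin m} {f : Fin n → Bool} (hr : Reach j f) (p p' : ℕ)
    (hd : n ∣ (p + p')) (hpair : f (p:Fin n) = f ((p:Fin n)+1))
    (hfire : j + (p:Fin m) = 0) :
    Reach ((1 : Fin m) + (p' : Fin m)) f := by
  have h2 := hr.swap (by omega) hn3 p p' hd
  rwa [hfire, tp01_zero (by omega), swapAt_eq_self hpair] at h2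

lemma reach_fireB1 (hm3 : 3 ≤ m) (hn3 : 3 ≤ n) {j : Fin m} {f : Fin n → Bool} (hr : Reach j f) (p p' : ℕ)
    (hd : n ∣ (p + p')) (hpair : f (p:Fin n) = f ((p:Fin n)+1))
    (hfire : j + (p:Fin m) = 1) :
    Reach ((p' : Fin m)) f := by
  have h2 := hr.swap (by omega) hn3 p p' hd
  rwa [hfire, tp01_one (by omega), swapAt_eq_self hpair, zero_add] at h2

end Gadgets

end SCProof
namespace SCProof
open SCPaper

variable {m n : ℕ}

/-- The block `{n-k, ..., n-1}` as a bit-vector. -/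
def Bk (n k : ℕ) : Fin n → Bool := fun q => decide (n - k ≤ q.val)

section Blocks

variable [NeZero m] [NeZero n]

lemma Bk_zero (hn1 : 1 ≤ n) : Bk n 0 = fun _ => false := by
  funext q
  have := q.isLt
  simp only [Bk, Nat.sub_zero, decide_eq_false_iff_not]
  omega

lemma start_set_eq (hn1 : 1 ≤ n) :
    (fun q : Fin n => decide (q.val = n-1)) = Bk n 1 := by
  funext q
  have := q.isLt
  simp only [Bk, decide_eq_decide]
  omega

lemma reach_empty (hm3 : 3 ≤ m) (hn3 : 3 ≤ n) (i : Fin m) : Reach i (Bk n 0) := by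
  -- from the start, apply c to empty the set
  have h0 : Reach (⟨0, NeZero.pos m⟩ : Fin m) (Bk n 1) := by
    rw [← start_set_eq (by omega)]; exact reach_start
  have h1 : Reach (0 : Fin m) (fun _ : Fin n => false) := by
    refine reach_of_evalFrom (w := [2]) h0 ?_
    show (PD m n _ _).step (⟨0, NeZero.pos m⟩, Bk n 1) 2 = _
    rw [step_c]
    refine Prod.ext ?_ ?_
    · show sing m ⟨0, NeZero.pos m⟩ = 0
      rw [show (⟨0, NeZero.pos m⟩ : Fin m) = 0 from rfl]
      refine sing_of_ne (by omega) ?_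
      intro h
      have hval := congrArg Fin.val h
      rw [castLast_val (by omega)] at hval
      have h0 : (0 : Fin m).val = 0 := rfl
      omega
    · funext q
      show Bk n 1 (sing n q) = false
      rw [sing_char (show 1 ≤ n by omega)]
      by_cases e : q = ((n-1 : ℕ) : Fin n)
      · rw [if_pos e]
        simp only [Bk, decide_eq_false_iff_not]
        show ¬ (n - 1 ≤ (0 : Fin n).val)
        show ¬ (n - 1 ≤ 0)
        omega
      · rw [if_neg e]
        have : q.val ≠ n - 1 := fun h => e (Fin.ext (by rw [h, castLast_val (by omega)]))
        simp only [Bk, decide_eq_false_iff_not]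
        have := q.isLt
        omega
  -- full control at the empty set
  have h2 := h1.rot (by omega) (by omega) (m-1)
  rw [zero_add] at h2
  have h3 : Reach (0 : Fin m) (fun _ : Fin n => false) := by
    refine reach_of_evalFrom (w := [2]) h2 ?_
    show (PD m n _ _).step _ 2 = _
    rw [step_c, sing_last (by omega)]
  have h4 := h3.rot (by omega) (by omega) i.val
  rw [zero_add, Fin.cast_val_eq_self] at h4
  rw [Bk_zero (by omega)]
  exact h4

lemma castFin_eq_zero_of_dvd {a : ℕ} (h : m ∣ a) : (a : Fin m) = 0 :=
  Fin.natCast_eq_zero.2 h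

/-- All tokens are reachable together with the singleton `{n-1}`. -/
lemma reach_B1 (hm3 : 3 ≤ m) (hn3 : 3 ≤ n) :
    ∀ r : ℕ, r < Nat.gcd m n → ∀ v : ℕ, v % Nat.gcd m n = r % Nat.gcd m n →
      Reach ((v : Fin m)) (Bk n 1) := by
  set g := Nat.gcd m n with hgdef
  have hgm : g ∣ m := Nat.gcd_dvd_left m n
  have hgn : g ∣ n := Nat.gcd_dvd_right m n
  have hgpos : 0 < g := Nat.gcd_pos_of_pos_left n (by omega)
  have hgn' : g ≤ n := Nat.le_of_dvd (by omega) hgn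
  intro r
  induction r with
  | zero =>
    intro _ v hv
    obtain ⟨p, hpn, hpm⟩ := crt_exists (m := m) (n := n) 0 v
      (by rw [Nat.ModEq, ← hgdef]; omega)
    have h0 : Reach (⟨0, NeZero.pos m⟩ : Fin m) (Bk n 1) := by
      rw [← start_set_eq (by omega)]; exact reach_start
    have h1 := h0.rot (by omega) (by omega) p
    have htok : (⟨0, NeZero.pos m⟩ : Fin m) + (p : Fin m) = (v : Fin m) := by
      rw [show (⟨0, NeZero.pos m⟩ : Fin m) = 0 from rfl, zero_add]
      exact castFin_eq_of_modEq hpm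
    have hset : (fun q : Fin n => Bk n 1 (q + (p : Fin n))) = Bk n 1 := by
      have : (p : Fin n) = 0 := by
        rw [show (0 : Fin n) = ((0:ℕ) : Fin n) from by norm_num]
        exact castFin_eq_of_modEq hpn
      rw [this]
      funext q; rw [add_zero]
    rwa [htok, hset] at h1
  | succ r ih =>
    intro hr1 v hv
    have hrg : r < g := by omega
    -- the position class of the source
    set x₁ : ℕ := (g - r % g) % g with hx₁def
    have hx₁lt : x₁ < g := Nat.mod_lt _ hgpos
    have hx₁sum : (x₁ + r) % g = 0 := by
      rcases Nat.eq_zero_or_pos r with h | h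
      · subst h
        simp [hx₁def, Nat.mod_self]
      · have h1 : r % g = r := Nat.mod_eq_of_lt hrg
        have h2 : x₁ = g - r := by rw [hx₁def, h1, Nat.mod_eq_of_lt (by omega)]
        rw [h2, show g - r + r = g from by omega, Nat.mod_self]
    have hx₁r : (x₁ + r) ≡ 0 [MOD g] := by rw [Nat.ModEq]; simp [hx₁sum]
    have hvmod : v ≡ r + 1 [MOD g] := by
      rw [Nat.ModEq]; rw [hv]
    -- case split on the position of x₁
    rcases show x₁ + 3 ≤ n ∨ x₁ = n - 2 ∨ x₁ = n - 1 from by omega with hA | hB | hC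
    · -- b-gadget at pair (x₁, x₁+1)
      set vj : ℕ := x₁ * (m - 1) with hvjdef
      have hvj : vj % g = r % g := by
        have h1 : vj + x₁ = x₁ * m := by
          rw [hvjdef]
          have e : x₁ * (m - 1) + x₁ = x₁ * ((m-1) + 1) := by ring
          rw [e, show m - 1 + 1 = m from by omega]
        have h2 : (vj + x₁) ≡ 0 [MOD g] := (Nat.modEq_zero_iff_dvd).2 (by
          rw [h1]; exact Dvd.dvd.mul_left hgm x₁)
        have h3 : vj + (x₁ + r) ≡ 0 + r [MOD g] := by
          rw [← add_assoc]
          exact Nat.ModEq.add_right r h2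
        have h4 : vj + (x₁ + r) ≡ vj + 0 [MOD g] := Nat.ModEq.add_left vj hx₁r
        have := (h4.symm.trans h3)
        simpa [Nat.ModEq] using this
      have hreachj := ih (by omega) vj hvj
      obtain ⟨p', hp'n, hp'm⟩ := crt_exists (m := m) (n := n) (n - x₁) (v + m - 1) (by
        have e1 : (n - x₁) + (x₁ + r) = n + r := by omega
        have e2 : (v + m - 1) + (x₁ + r) ≡ (v + m - 1) + 0 [MOD g] :=
          Nat.ModEq.add_left _ hx₁r
        refine Nat.ModEq.add_right_cancel' (x₁ + r) ?_
        rw [e1]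
        refine Nat.ModEq.trans ?_ (e2.symm.trans ?_)
        · show n + r ≡ v + m - 1 [MOD g]
          have hn0 : n ≡ 0 [MOD g] := (Nat.modEq_zero_iff_dvd).2 hgn
          have hm0 : m ≡ 0 [MOD g] := (Nat.modEq_zero_iff_dvd).2 hgm
          have e3 : v + m - 1 = (v - 1) + m := by
            have : 1 ≤ v := by
              by_contra hc
              have hv0 : v = 0 := by omega
              rw [hv0] at hv
              simp at hv
              have : (r+1) % g < g := Nat.mod_lt _ hgpos
              have h5 : (r+1) % g = r + 1 := Nat.mod_eq_of_lt (by omega)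
              omega
            omega
          rw [e3]
          have e4 : v - 1 ≡ r [MOD g] := by
            have : v - 1 + 1 ≡ r + 1 [MOD g] := by
              rw [show v - 1 + 1 = v from by
                have : 1 ≤ v := by
                  by_contra hc
                  have hv0 : v = 0 := by omega
                  rw [hv0] at hv
                  simp at hv
                  have h5 : (r+1) % g = r + 1 := Nat.mod_eq_of_lt (by omega)
                  omega
                omega]
              exact hvmod
            exact Nat.ModEq.add_right_cancel' 1 this
          calc n + r ≡ 0 + r [MOD g] := Nat.ModEq.add_right r hn0
            _ ≡ r [MOD g] := by rw [zero_add]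
            _ ≡ (v-1) [MOD g] := e4.symm
            _ ≡ (v-1) + 0 [MOD g] := by rw [add_zero]
            _ ≡ (v-1) + m [MOD g] := Nat.ModEq.add_left _ hm0.symm
        · rfl)
      have hd : n ∣ (x₁ + p') := by
        have : (x₁ + p') ≡ (x₁ + (n - x₁)) [MOD n] := Nat.ModEq.add_left x₁ hp'n
        rw [show x₁ + (n - x₁) = n from by omega] at this
        have : (x₁ + p') % n = n % n := this
        rw [Nat.mod_self] at this
        exact (Nat.modEq_zero_iff_dvd).1 (by rw [Nat.ModEq]; simp [this])
      have hpair : Bk n 1 ((x₁ : Fin n)) = Bk n 1 ((x₁ : Fin n) + 1) := by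
        have hv1 : ((x₁ : Fin n)).val = x₁ := by rw [castFin_val]; exact Nat.mod_eq_of_lt (by omega)
        have hv2 : ((x₁ : Fin n) + 1).val = x₁ + 1 := by
          rw [Fin.add_def, hv1, fone_val (by omega)]
          exact Nat.mod_eq_of_lt (by omega)
      
        simp only [Bk, hv1, hv2, decide_eq_decide]
        omega
      have hfire : (vj : Fin m) + (x₁ : Fin m) = 0 := by
        rw [show ((vj : Fin m) + (x₁ : Fin m)) = ((vj + x₁ : ℕ) : Fin m) from by push_cast; ring]
        refine castFin_eq_zero_of_dvd ?_
        rw [show vj + x₁ = x₁ * m from by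
          rw [hvjdef]
          have e : x₁ * (m - 1) + x₁ = x₁ * ((m-1) + 1) := by ring
          rw [e, show m - 1 + 1 = m from by omega]]
        exact Dvd.intro_left x₁ rfl
      have hg := reach_fireB0 hm3 hn3 hreachj x₁ p' hd hpair hfire
      have : (1 : Fin m) + (p' : Fin m) = (v : Fin m) := by
        rw [show ((1 : Fin m) + (p' : Fin m)) = ((1 + p' : ℕ) : Fin m) from by push_cast; ring]
        refine castFin_eq_of_modEq ?_
        calc 1 + p' ≡ 1 + (v + m - 1) [MOD m] := Nat.ModEq.add_left 1 hp'm
          _ = v + m := by omega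
          _ ≡ v + 0 [MOD m] := Nat.ModEq.add_left v ((Nat.modEq_zero_iff_dvd).2 dvd_rfl)
          _ = v := by omega
      rwa [this] at hg
    · -- x₁ = n-2 : c-gadget at pair (n-4, n-3); forces g = n, r = 2, n ≥ 4, n ∣ m
      have hgn2 : g = n := by
        have hcase : g = n - 1 ∨ g = n := by omega
        rcases hcase with h | h
        · exfalso
          have hdd : n - 1 ∣ 1 := by
            have h2 : n - 1 ∣ n - (n - 1) := Nat.dvd_sub (h ▸ hgn) dvd_rfl
            rwa [show n - (n-1) = 1 from by omega] at h2
          have := Nat.le_of_dvd (by omega) hdd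
          omega
        · exact h
      have hnm : n ∣ m := by rw [← hgn2]; exact hgm
      have hr2 : r = 2 := by
        have h1 : g ∣ (x₁ + r) := (Nat.modEq_zero_iff_dvd).1 (by rw [Nat.ModEq]; simp [hx₁sum])
        obtain ⟨c, hc⟩ := h1
        have hclt : c < 2 := by
          refine Nat.lt_of_mul_lt_mul_left (a := g) ?_
          rw [← hc]; omega
        interval_cases c <;> omega
      have hn4 : 4 ≤ n := by omega
      have hmn' : n ≤ m := Nat.le_of_dvd (by omega) hnm
      set vj : ℕ := m + 2 - n with hvjdef
      have hvj : vj % g = r % g := by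
        obtain ⟨t, ht⟩ := hnm
        have ht1 : 1 ≤ t := by
          rcases Nat.eq_zero_or_pos t with h | h
          · rw [h, mul_zero] at ht; omega
          · omega
        have : vj = n * (t - 1) + 2 := by
          rw [hvjdef, ht]
          cases t with
          | zero => omega
          | succ t' =>
            have e1 : n * (t' + 1) = n * t' + n := by ring
            have e2 : n * (t' + 1 - 1) = n * t' := by simp
            omega
        rw [this, hgn2, Nat.mul_add_mod, hr2]
      have hreachj := ih (by omega) vj hvj
      obtain ⟨p', hp'n, hp'm⟩ := crt_exists (m := m) (n := n) 3 v (by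
        have : v % g = 3 % g := by rw [hv, hr2]
        rw [Nat.ModEq, ← hgdef]; omega)
      have hd : n ∣ ((n - 3) + p') := by
        have h1 : ((n-3) + p') % n = ((n-3) + 3) % n := by
          have := Nat.ModEq.add_left (n-3) hp'n
          exact this
        rw [show n - 3 + 3 = n from by omega, Nat.mod_self] at h1
        exact Nat.dvd_of_mod_eq_zero h1
      have hsub : ((n - 3 : ℕ) : Fin n) - 1 = ((n - 4 : ℕ) : Fin n) := by
        refine (eq_sub_of_add_eq ?_).symm
        rw [show (((n-4 : ℕ) : Fin n) + 1) = ((n - 4 + 1 : ℕ) : Fin n) from by push_cast; ring]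
        congr 1; omega
      have hpair : Bk n 1 (((n - 3 : ℕ) : Fin n) - 1) = Bk n 1 ((n - 3 : ℕ) : Fin n) := by
        rw [hsub]
        have hv1 : (((n-4 : ℕ)) : Fin n).val = n - 4 := by
          rw [castFin_val]; exact Nat.mod_eq_of_lt (by omega)
        have hv2 : (((n-3 : ℕ)) : Fin n).val = n - 3 := by
          rw [castFin_val]; exact Nat.mod_eq_of_lt (by omega)
        simp only [Bk, hv1, hv2, decide_eq_decide]
        omega
      have hfire : (vj : Fin m) + ((n - 3 : ℕ) : Fin m) = ((m-1 : ℕ) : Fin m) := by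
        rw [show ((vj : Fin m) + ((n - 3:ℕ) : Fin m)) = ((vj + (n-3) : ℕ) : Fin m) from by
          push_cast; ring]
        congr 1
        omega
      have hg := reach_fireC hm3 hn3 hreachj (n-3) p' hd hpair hfire
      have : (p' : Fin m) = (v : Fin m) := castFin_eq_of_modEq hp'm
      rwa [this] at hg
    · -- x₁ = n-1 : c-gadget at pair (n-3, n-2); forces g = n, r = 1, n ∣ m
      have hgn2 : g = n := by omega
      have hnm : n ∣ m := by rw [← hgn2]; exact hgm
      have hr1 : r = 1 := by
        have h1 : g ∣ (x₁ + r) := (Nat.modEq_zero_iff_dvd).1 (by rw [Nat.ModEq]; simp [hx₁sum])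
        obtain ⟨c, hc⟩ := h1
        have hclt : c < 2 := by
          refine Nat.lt_of_mul_lt_mul_left (a := g) ?_
          rw [← hc]; omega
        interval_cases c <;> omega
      have hmn' : n ≤ m := Nat.le_of_dvd (by omega) hnm
      set vj : ℕ := m + 1 - n with hvjdef
      have hvj : vj % g = r % g := by
        obtain ⟨t, ht⟩ := hnm
        have ht1 : 1 ≤ t := by
          rcases Nat.eq_zero_or_pos t with h | h
          · rw [h, mul_zero] at ht; omega
          · omega
        have : vj = n * (t - 1) + 1 := by
          rw [hvjdef, ht]
          cases t with
          | zero => omega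
          | succ t' =>
            have e1 : n * (t' + 1) = n * t' + n := by ring
            have e2 : n * (t' + 1 - 1) = n * t' := by simp
            omega
        rw [this, hgn2, Nat.mul_add_mod, hr1]
      have hreachj := ih (by omega) vj hvj
      obtain ⟨p', hp'n, hp'm⟩ := crt_exists (m := m) (n := n) 2 v (by
        have : v % g = 2 % g := by rw [hv, hr1]
        rw [Nat.ModEq, ← hgdef]; omega)
      have hd : n ∣ ((n - 2) + p') := by
        have h1 : ((n-2) + p') % n = ((n-2) + 2) % n := Nat.ModEq.add_left (n-2) hp'n
        rw [show n - 2 + 2 = n from by omega, Nat.mod_self] at h1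
        exact Nat.dvd_of_mod_eq_zero h1
      have hsub : ((n - 2 : ℕ) : Fin n) - 1 = ((n - 3 : ℕ) : Fin n) := by
        refine (eq_sub_of_add_eq ?_).symm
        rw [show (((n-3 : ℕ) : Fin n) + 1) = ((n - 3 + 1 : ℕ) : Fin n) from by push_cast; ring]
        congr 1; omega
      have hpair : Bk n 1 (((n - 2 : ℕ) : Fin n) - 1) = Bk n 1 ((n - 2 : ℕ) : Fin n) := by
        rw [hsub]
        have hv1 : (((n-3 : ℕ)) : Fin n).val = n - 3 := by
          rw [castFin_val]; exact Nat.mod_eq_of_lt (by omega)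
        have hv2 : (((n-2 : ℕ)) : Fin n).val = n - 2 := by
          rw [castFin_val]; exact Nat.mod_eq_of_lt (by omega)
        simp only [Bk, hv1, hv2, decide_eq_decide]
        omega
      have hfire : (vj : Fin m) + ((n - 2 : ℕ) : Fin m) = ((m-1 : ℕ) : Fin m) := by
        rw [show ((vj : Fin m) + ((n - 2:ℕ) : Fin m)) = ((vj + (n-2) : ℕ) : Fin m) from by
          push_cast; ring]
        congr 1
        omega
      have hg := reach_fireC hm3 hn3 hreachj (n-2) p' hd hpair hfire
      have : (p' : Fin m) = (v : Fin m) := castFin_eq_of_modEq hp'm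
      rwa [this] at hg

end Blocks

end SCProof
namespace SCProof
open SCPaper

variable {m n : ℕ}

section BlocksMain

variable [NeZero m] [NeZero n]

lemma copyAt_Bk (hn3 : 3 ≤ n) (k : ℕ) (hk1 : 1 ≤ k) (hk : k ≤ n - 1) :
    copyAt (((n - k : ℕ)) : Fin n) (Bk n k) = Bk n (k+1) := by
  funext q
  have hx : (((n-k:ℕ)) : Fin n).val = n - k := by
    rw [castFin_val]; exact Nat.mod_eq_of_lt (by omega)
  have hv1 : (((n-k-1:ℕ)) : Fin n).val = n-k-1 := by
    rw [castFin_val]; exact Nat.mod_eq_of_lt (by omega)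
  have hsub : (((n-k:ℕ)) : Fin n) - 1 = (((n-k-1:ℕ)) : Fin n) := by
    refine (eq_sub_of_add_eq ?_).symm
    rw [show ((((n-k-1:ℕ)) : Fin n) + 1) = ((n-k-1+1 : ℕ) : Fin n) from by push_cast; ring]
    congr 1; omega
  rw [copyAt, hsub]
  by_cases e : q = ((n-k-1 : ℕ) : Fin n)
  · rw [if_pos e, e]
    simp only [Bk, hx, hv1, decide_eq_decide]
    omega
  · rw [if_neg e]
    have hqv : q.val ≠ n - k - 1 := fun h => e (Fin.ext (by rw [h, hv1]))
    simp only [Bk, decide_eq_decide]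
    have := q.isLt
    omega

lemma reach_Bk (hm3 : 3 ≤ m) (hn3 : 3 ≤ n) : ∀ k, k ≤ n → ∀ i : Fin m, Reach i (Bk n k) := by
  intro k
  induction k with
  | zero => exact fun _ i => reach_empty hm3 hn3 i
  | succ k ih =>
    intro hk1 i
    have hgpos : 0 < Nat.gcd m n := Nat.gcd_pos_of_pos_left n (by omega)
    rcases Nat.eq_zero_or_pos k with hk0 | hkpos
    · subst hk0
      have h := reach_B1 hm3 hn3 (i.val % Nat.gcd m n) (Nat.mod_lt _ hgpos) i.val
        (Nat.mod_mod_of_dvd _ dvd_rfl).symm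
      rwa [Fin.cast_val_eq_self] at h
    · -- k ≥ 1
      have route1 : ∀ (i' : Fin m) (p' : ℕ), p' ≡ k [MOD n] →
          i' - (p' : Fin m) ≠ ((m-1 : ℕ) : Fin m) → Reach i' (Bk n (k+1)) := by
        intro i' p' hp' hcond
        have hd : n ∣ ((n-k) + p') := by
          have h1 : ((n-k) + p') % n = ((n-k) + k) % n := Nat.ModEq.add_left _ hp'
          rw [show n-k+k = n from by omega, Nat.mod_self] at h1
          exact Nat.dvd_of_mod_eq_zero h1
        have h := reach_copyTok hm3 hn3 (f := Bk n k) (ih (by omega)) i' (n-k) p' hd hcond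
        rwa [copyAt_Bk hn3 k hkpos (by omega)] at h
      by_cases h1 : i - ((k:ℕ) : Fin m) ≠ ((m-1 : ℕ) : Fin m)
      · exact route1 i k Nat.ModEq.rfl h1
      by_cases h2 : i - ((k+n : ℕ) : Fin m) ≠ ((m-1:ℕ) : Fin m)
      · exact route1 i (k+n) (by rw [Nat.ModEq, Nat.add_mod_right]) h2
      push_neg at h1 h2
      -- derive m ∣ n and i = ↑(m-1) + ↑k
      have hcast : ((k+n : ℕ) : Fin m) = ((k:ℕ) : Fin m) + ((n:ℕ) : Fin m) := by push_cast; ring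
      have e2 : i - ((k:ℕ) : Fin m) - 0 = i - ((k:ℕ) : Fin m) - ((n:ℕ) : Fin m) := by
        calc i - ((k:ℕ) : Fin m) - 0 = ((m-1:ℕ) : Fin m) := by rw [sub_zero, h1]
          _ = i - ((k+n : ℕ) : Fin m) := h2.symm
          _ = i - ((k:ℕ) : Fin m) - ((n:ℕ) : Fin m) := by rw [hcast, sub_add_eq_sub_sub]
      have hn0 : ((n:ℕ) : Fin m) = 0 := (sub_right_inj.1 e2).symm
      have hmn : m ∣ n := Fin.natCast_eq_zero.1 hn0
      have hi : i = ((m-1:ℕ) : Fin m) + ((k:ℕ) : Fin m) := sub_eq_iff_eq_add.1 h1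
      have hcond1 : (i - 1) - ((k:ℕ) : Fin m) ≠ ((m-1:ℕ) : Fin m) := by
        intro hc
        rw [sub_right_comm, h1, sub_eq_self] at hc
        exact fne01 (by omega) hc.symm
      have hj : Reach (i - 1) (Bk n (k+1)) := route1 (i-1) k Nat.ModEq.rfl hcond1
      rcases Nat.lt_or_ge k 2 with hk1' | hk2
      · -- k = 1
        have hk1e : k = 1 := by omega
        subst hk1e
        have hi0 : i = 0 := by
          rw [hi, Nat.cast_one, castLast_add_one (by omega)]
        rcases eq_or_lt_of_le (Nat.le_of_dvd (by omega) hmn) with hmeq | hmlt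
        · -- m = n
          by_cases hn4 : n = 4
          · -- F4 : m = n = 4
            have hcond2 : (i + 1) - ((1:ℕ) : Fin m) ≠ ((m-1:ℕ) : Fin m) := by
              rw [Nat.cast_one, add_sub_cancel_right, hi0]
              intro hc
              have hval := congrArg Fin.val hc
              rw [castLast_val (by omega)] at hval
              have h0 : (0 : Fin m).val = 0 := rfl
              omega
            have hj2 : Reach (i + 1) (Bk n 2) := route1 (i+1) 1 Nat.ModEq.rfl hcond2
            have hd : n ∣ (4 + 4 : ℕ) := by rw [hn4]; exact ⟨2, rfl⟩
            have h4m : ((4:ℕ) : Fin m) = 0 := castFin_eq_zero_of_dvd (by rw [hmeq, hn4])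
            have h4n : ((4:ℕ) : Fin n) = 0 := castFin_eq_zero_of_dvd (by rw [hn4])
            have hfire : (i + 1) + ((4:ℕ) : Fin m) = 1 := by
              rw [h4m, add_zero, hi0, zero_add]
            have hpair : Bk n 2 ((4:ℕ) : Fin n) = Bk n 2 (((4:ℕ) : Fin n) + 1) := by
              rw [h4n, zero_add]
              have hz : (0 : Fin n).val = 0 := rfl
              have ho : (1 : Fin n).val = 1 := fone_val (by omega)
              simp only [Bk, hz, ho, decide_eq_decide]
              omega
            have hg := reach_fireB1 hm3 hn3 hj2 4 4 hd hpair hfire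
            rw [h4m] at hg
            rw [hi0]
            exact hg
          · -- F3 : m = n ≠ 4
            have hd : n ∣ (1 + (n-1) : ℕ) := ⟨1, by omega⟩
            have hfire : (i - 1) + ((1:ℕ) : Fin m) = 0 := by
              rw [Nat.cast_one, hi0]; ring
            have hpair : Bk n 2 ((1:ℕ) : Fin n) = Bk n 2 (((1:ℕ) : Fin n) + 1) := by
              have ho : ((1:ℕ) : Fin n).val = 1 := by
                rw [Nat.cast_one]; exact fone_val (by omega)
              have ht : (((1:ℕ) : Fin n) + 1).val = 2 := by
                rw [Fin.add_def, ho, fone_val (by omega)]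
                exact Nat.mod_eq_of_lt (by omega)
              simp only [Bk, ho, ht, decide_eq_decide]
              omega
            have hg := reach_fireB0 hm3 hn3 hj 1 (n-1) hd hpair hfire
            have htok : (1 : Fin m) + ((n-1 : ℕ) : Fin m) = i := by
              rw [show n - 1 = m - 1 from by omega, castLast_eq_neg_one (by omega), hi0]
              ring
            rwa [htok] at hg
        · -- F2 : m < n
          have h2m : 2 * m ≤ n := by
            obtain ⟨t, ht⟩ := hmn
            have ht2 : 2 ≤ t := by
              by_contra hc
              interval_cases t <;> omega
            have : m * 2 ≤ m * t := Nat.mul_le_mul_left m ht2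
            omega
          have hd : n ∣ ((n - m) + (n + m) : ℕ) := ⟨2, by omega⟩
          have hnm0 : ((n - m : ℕ) : Fin m) = 0 :=
            castFin_eq_zero_of_dvd (Nat.dvd_sub hmn dvd_rfl)
          have hfire : (i - 1) + ((n - m:ℕ) : Fin m) = ((m-1:ℕ) : Fin m) := by
            rw [hnm0, add_zero, hi0, castLast_eq_neg_one (by omega)]
            ring
          have hpair : Bk n 2 (((n-m:ℕ) : Fin n) - 1) = Bk n 2 ((n-m:ℕ) : Fin n) := by
            have hv2 : ((n-m:ℕ) : Fin n).val = n - m := by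
              rw [castFin_val]; exact Nat.mod_eq_of_lt (by omega)
            have hsub : ((n-m:ℕ) : Fin n) - 1 = ((n-m-1:ℕ) : Fin n) := by
              refine (eq_sub_of_add_eq ?_).symm
              rw [show ((((n-m-1:ℕ)) : Fin n) + 1) = ((n-m-1+1 : ℕ) : Fin n) from by
                push_cast; ring]
              congr 1; omega
            have hv1 : ((n-m-1:ℕ) : Fin n).val = n-m-1 := by
              rw [castFin_val]; exact Nat.mod_eq_of_lt (by omega)
            rw [hsub]
            simp only [Bk, hv1, hv2, decide_eq_decide]
            omega
          have hg := reach_fireC hm3 hn3 hj (n-m) (n+m) hd hpair hfire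
          have htok : ((n+m : ℕ) : Fin m) = i := by
            rw [show ((n+m:ℕ) : Fin m) = ((n:ℕ) : Fin m) + ((m:ℕ) : Fin m) from by
              push_cast; ring, hn0, Fin.natCast_self, hi0, zero_add]
          rwa [htok] at hg
      · -- F1 : k ≥ 2
        have hcastp : ((n - k + 1 : ℕ) : Fin m) = 1 - ((k:ℕ) : Fin m) := by
          have e : ((n - k + 1 : ℕ) : Fin m) + ((k:ℕ) : Fin m) = ((n + 1 : ℕ) : Fin m) := by
            rw [show (((n-k+1:ℕ)):Fin m) + ((k:ℕ):Fin m) = ((n-k+1+k : ℕ) : Fin m) from by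
              push_cast; ring]
            congr 1; omega
          have e2 : ((n+1:ℕ) : Fin m) = 1 := by
            rw [show ((n+1:ℕ):Fin m) = ((n:ℕ):Fin m) + 1 from by push_cast; ring, hn0, zero_add]
          rw [e2] at e
          exact eq_sub_of_add_eq e
        have hfire : (i - 1) + ((n-k+1 : ℕ) : Fin m) = ((m-1:ℕ):Fin m) := by
          rw [hcastp, hi]; ring
        have hpair : Bk n (k+1) (((n-k+1:ℕ) : Fin n) - 1) = Bk n (k+1) ((n-k+1:ℕ) : Fin n) := by
          have hv2 : ((n-k+1:ℕ) : Fin n).val = n - k + 1 := by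
            rw [castFin_val]; exact Nat.mod_eq_of_lt (by omega)
          have hsub : ((n-k+1:ℕ) : Fin n) - 1 = ((n-k:ℕ) : Fin n) := by
            refine (eq_sub_of_add_eq ?_).symm
            rw [show ((((n-k:ℕ)) : Fin n) + 1) = ((n-k+1 : ℕ) : Fin n) from by push_cast; ring]
          have hv1 : ((n-k:ℕ) : Fin n).val = n-k := by
            rw [castFin_val]; exact Nat.mod_eq_of_lt (by omega)
          rw [hsub]
          simp only [Bk, hv1, hv2, decide_eq_decide]
          omega
        have hd : n ∣ ((n-k+1) + (n+k-1) : ℕ) := ⟨2, by omega⟩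
        have hg := reach_fireC hm3 hn3 hj (n-k+1) (n+k-1) hd hpair hfire
        have htok : ((n+k-1 : ℕ) : Fin m) = i := by
          rw [hi]
          rw [show ((n+k-1:ℕ) : Fin m) = ((n:ℕ) : Fin m) + ((k-1:ℕ) : Fin m) from by
            rw [show n+k-1 = n + (k-1) from by omega]; push_cast; ring, hn0, zero_add]
          rw [show ((m-1:ℕ):Fin m) + ((k:ℕ):Fin m) = ((m-1+k : ℕ) : Fin m) from by
            push_cast; ring]
          rw [show m-1+k = m + (k-1) from by omega,
            show ((m + (k-1) : ℕ) : Fin m) = ((m:ℕ):Fin m) + ((k-1:ℕ):Fin m) from by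
              push_cast; ring, Fin.natCast_self, zero_add]
        rwa [htok] at hg

end BlocksMain

end SCProof
namespace SCProof
open SCPaper

variable {m n : ℕ}

section Sorting

variable [NeZero m] [NeZero n]

/-- Weight used for the sorting induction. -/
def wt (f : Fin n → Bool) : ℕ := ∑ q : Fin n, if f q then n - 1 - q.val else 0

lemma val_add_one_lt {x : Fin n} (h : x.val + 1 < n) : (x + 1).val = x.val + 1 := by
  have h2 : (1 : Fin n).val = 1 := fone_val (by omega)
  rw [Fin.add_def]
  show (x.val + (1 : Fin n).val) % n = x.val + 1
  rw [h2]
  exact Nat.mod_eq_of_lt h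

lemma fin_ne_add_one {x : Fin n} (h : x.val + 1 < n) : x ≠ x + 1 := by
  intro hc
  have := congrArg Fin.val hc
  rw [val_add_one_lt h] at this
  omega

lemma swapAt_invol (x : Fin n) (hne : x ≠ x + 1) (f : Fin n → Bool) :
    swapAt x (swapAt x f) = f := by
  funext q
  simp only [swapAt]
  by_cases e0 : q = x
  · simp [e0, hne.symm]
  · by_cases e1 : q = x + 1
    · simp [e0, e1, hne.symm]
    · simp [e0, e1]

lemma wt_swap {f : Fin n → Bool} (x : Fin n) (h2 : x.val + 2 ≤ n)
    (hx : f x = true) (hx1 : f (x+1) = false) :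
    wt (swapAt x f) + 1 = wt f := by
  have hv1 : (x+1).val = x.val + 1 := val_add_one_lt (by omega)
  have hne : x ≠ x + 1 := fin_ne_add_one (by omega)
  set G : Fin n → ℕ := fun q => if f q then n - 1 - q.val else 0 with hG
  have hH : (fun q => if swapAt x f q then n - 1 - q.val else 0)
      = Function.update (Function.update G x 0) (x+1) (n - 1 - (x.val+1)) := by
    funext q
    by_cases e0 : q = x
    · rw [e0, Function.update_of_ne hne, Function.update_self]
      show (if swapAt x f x then _ else _) = 0
      rw [swapAt, if_pos rfl, hx1]
      simp
    · by_cases e1 : q = x + 1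
      · rw [e1, Function.update_self]
        show (if swapAt x f (x+1) then n - 1 - (x+1).val else _) = _
        rw [swapAt, if_neg hne.symm, if_pos rfl, hx, hv1]
        simp
      · rw [Function.update_of_ne e1, Function.update_of_ne e0]
        show (if swapAt x f q then _ else _) = G q
        rw [swapAt, if_neg e0, if_neg e1, hG]
    
  have hx1mem : (x+1) ∈ (Finset.univ : Finset (Fin n)) := Finset.mem_univ _
  have hxmem : x ∈ (Finset.univ : Finset (Fin n)) \ {x+1} := by
    rw [Finset.mem_sdiff]
    exact ⟨Finset.mem_univ _, by simp [hne]⟩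
  have e1 : wt (swapAt x f)
      = (n - 1 - (x.val+1)) + ∑ q ∈ Finset.univ \ {x+1}, Function.update G x 0 q := by
    rw [wt, hH]
    exact Finset.sum_update_of_mem hx1mem _ _
  have e2 : ∑ q ∈ Finset.univ \ {x+1}, Function.update G x 0 q
      = 0 + ∑ q ∈ (Finset.univ \ {x+1}) \ {x}, G q := Finset.sum_update_of_mem hxmem _ _
  have e3 : wt f = G (x+1) + ∑ q ∈ (Finset.univ : Finset (Fin n)).erase (x+1), G q :=
    (Finset.add_sum_erase _ _ (Finset.mem_univ _)).symm
  have e4 : ∑ q ∈ (Finset.univ : Finset (Fin n)).erase (x+1), G q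
      = G x + ∑ q ∈ ((Finset.univ : Finset (Fin n)).erase (x+1)).erase x, G q := by
    refine (Finset.add_sum_erase _ _ ?_).symm
    rw [Finset.mem_erase]
    exact ⟨hne, Finset.mem_univ _⟩
  have hseteq : ((Finset.univ : Finset (Fin n)).erase (x+1)).erase x
      = (Finset.univ \ {x+1}) \ {x} := by
    rw [Finset.erase_eq, Finset.erase_eq]
  have hGx1 : G (x+1) = 0 := by rw [hG]; simp [hx1]
  have hGx : G x = n - 1 - x.val := by rw [hG]; simp [hx]
  rw [e1, e2, e3, e4, hseteq, hGx1, hGx]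
  omega

lemma block_or_swap (hn3 : 3 ≤ n) (f : Fin n → Bool) :
    (∃ k, k ≤ n ∧ f = Bk n k) ∨
      ∃ x : Fin n, x.val + 2 ≤ n ∧ f x = true ∧ f (x+1) = false := by
  by_cases hsw : ∃ x : Fin n, x.val + 2 ≤ n ∧ f x = true ∧ f (x+1) = false
  · right; exact hsw
  left
  push_neg at hsw
  have step : ∀ x : Fin n, x.val + 2 ≤ n → f x = true → f (x+1) = true := by
    intro x hx hfx
    exact Bool.ne_false_iff.1 (hsw x hx hfx)
  by_cases hex : ∃ x : Fin n, f x = true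
  · have hne : (Finset.univ.filter (fun q : Fin n => f q = true)).Nonempty := by
      obtain ⟨x, hx⟩ := hex
      exact ⟨x, by simp [hx]⟩
    set q₀ : Fin n := (Finset.univ.filter (fun q : Fin n => f q = true)).min' hne with hq₀
    have hq₀true : f q₀ = true := by
      have := Finset.min'_mem _ hne
      rw [Finset.mem_filter] at this
      exact this.2
    have hq₀min : ∀ q : Fin n, f q = true → q₀ ≤ q := by
      intro q hq
      exact Finset.min'_le _ _ (by simp [hq])
    have mono : ∀ d : ℕ, ∀ hlt : q₀.val + d < n, f ⟨q₀.val + d, hlt⟩ = true := by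
      intro d
      induction d with
      | zero =>
        intro hlt
        have hqe : (⟨q₀.val + 0, hlt⟩ : Fin n) = q₀ :=
          Fin.ext (show q₀.val + 0 = q₀.val by omega)
        rw [hqe]
        exact hq₀true
      | succ d ihd =>
        intro hlt
        have hd : q₀.val + d < n := by omega
        have hprev := ihd hd
        have hstep := step ⟨q₀.val + d, hd⟩ (show q₀.val + d + 2 ≤ n by omega) hprev
        have harg : (⟨q₀.val + d, hd⟩ : Fin n) + 1 = (⟨q₀.val + (d+1), hlt⟩ : Fin n) := by
          apply Fin.ext
          rw [val_add_one_lt (show (⟨q₀.val + d, hd⟩ : Fin n).val + 1 < n from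
            show q₀.val + d + 1 < n by omega)]
          show q₀.val + d + 1 = q₀.val + (d + 1)
          omega
        rw [harg] at hstep
        exact hstep
    refine ⟨n - q₀.val, by omega, ?_⟩
    funext q
    have hqlt := q.isLt
    have hq₀lt := q₀.isLt
    rw [Bk]
    by_cases hcmp : q₀.val ≤ q.val
    · have hfq : f q = true := by
        have hm2 := mono (q.val - q₀.val) (show q₀.val + (q.val - q₀.val) < n by omega)
        have hqe : (⟨q₀.val + (q.val - q₀.val), show q₀.val + (q.val - q₀.val) < n by omega⟩
            : Fin n) = q := Fin.ext (show q₀.val + (q.val - q₀.val) = q.val by omega)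
        rw [hqe] at hm2
        exact hm2
      rw [hfq]
      symm
      rw [decide_eq_true_eq]
      omega
    · have : f q = false := by
        by_contra hc
        have : f q = true := Bool.ne_false_iff.1 hc
        have := hq₀min q this
        rw [Fin.le_def] at this
        omega
      rw [this]
      symm
      rw [decide_eq_false_iff_not]
      omega
  · refine ⟨0, by omega, ?_⟩
    push_neg at hex
    funext q
    have h1 : f q = false := by
      by_contra hc
      exact (hex q) (Bool.ne_false_iff.1 hc)
    rw [h1, Bk]
    symm
    rw [decide_eq_false_iff_not]
    have := q.isLt
    omega

/-- Full reachability. -/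
lemma reach_all (hm3 : 3 ≤ m) (hn3 : 3 ≤ n) (f : Fin n → Bool) (i : Fin m) : Reach i f := by
  suffices H : ∀ W (f : Fin n → Bool), wt f = W → ∀ i : Fin m, Reach i f from H (wt f) f rfl i
  intro W
  induction W using Nat.strong_induction_on with
  | _ W ih =>
    intro f hW i
    rcases block_or_swap hn3 f with ⟨k, hk, hfB⟩ | ⟨x, hx2, hfx, hfx1⟩
    · rw [hfB]; exact reach_Bk hm3 hn3 k hk i
    · have hne : x ≠ x + 1 := fin_ne_add_one (by omega)
      have hswap : swapAt x (swapAt x f) = f := swapAt_invol x hne f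
      have hwt : wt (swapAt x f) < W := by
        have := wt_swap x hx2 hfx hfx1
        omega
      have hall : ∀ i' : Fin m, Reach i' (swapAt x f) := fun i' =>
        ih (wt (swapAt x f)) hwt (swapAt x f) rfl i'
      have hres := reach_swapAll hm3 hn3 x hall i
      rwa [hswap] at hres

end Sorting

end SCProof
namespace SCProof
open SCPaper

variable {m n : ℕ}

section Disting

variable [NeZero m] [NeZero n]

lemma prop_xor_neq {A B S : Prop} (hA : A) (hB : ¬ B) : (A ≠ S) ≠ (B ≠ S) := by
  simp only [ne_eq, eq_iff_iff]
  by_cases hS : S <;> tauto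

lemma prop_xor_neq' {A B S T : Prop} (hA : ¬A) (hB : ¬B) (hST : ¬ (S ↔ T)) :
    (A ≠ S) ≠ (B ≠ T) := by
  simp only [ne_eq, eq_iff_iff]
  by_cases hS : S <;> by_cases hT : T <;> tauto

lemma sing_val_ne (hm3 : 3 ≤ m) (v : Fin m) : (sing m v).val ≠ m - 1 := by
  by_cases hv : v = ((m-1 : ℕ) : Fin m)
  · rw [hv, sing_last (by omega)]
    show (0 : Fin m).val ≠ m - 1
    show (0 : ℕ) ≠ m - 1
    omega
  · rw [sing_of_ne (by omega) hv]
    intro hc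
    exact hv (Fin.ext (by rw [castLast_val (by omega), hc]))

lemma bool_ne_iff {a b : Bool} (hab : a ≠ b) : ¬ ((a = true) ↔ (b = true)) := by
  intro hiff
  apply hab
  rcases Bool.eq_false_or_eq_true a with h1 | h1 <;>
    rcases Bool.eq_false_or_eq_true b with h2 | h2 <;>
      simp [h1, h2] at hiff ⊢

/-- The `a^q c` distinguisher when the first token fires. -/
lemma distinguishC (hm3 : 3 ≤ m) (hn3 : 3 ≤ n) (i j : Fin m) (f h : Fin n → Bool) (q : Fin n)
    (hq : f q ≠ h q) (hfire : (i + ((q.val : ℕ) : Fin m)).val = m - 1) :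
    ∃ z : List (Fin 3),
      ((PD m n (NeZero.pos m) (NeZero.pos n)).evalFrom (i, f) z
          ∈ (PD m n (NeZero.pos m) (NeZero.pos n)).accept) ≠
      ((PD m n (NeZero.pos m) (NeZero.pos n)).evalFrom (j, h) z
          ∈ (PD m n (NeZero.pos m) (NeZero.pos n)).accept) := by
  refine ⟨wA q.val ++ [2], ?_⟩
  rw [DFA.evalFrom_of_append, DFA.evalFrom_of_append, evalFrom_wA (by omega) (by omega),
    evalFrom_wA (by omega) (by omega)]
  have hstep : ∀ (t : Fin m) (g : Fin n → Bool),
      (PD m n (NeZero.pos m) (NeZero.pos n)).evalFrom (t, g) [2]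
        = (sing m t, fun q' => g (sing n q')) := fun t g => step_c t g
  rw [hstep, hstep]
  have hmem : ∀ (t : Fin m) (g : Fin n → Bool),
      ((t, g) ∈ (PD m n (NeZero.pos m) (NeZero.pos n)).accept)
        = ((t.val = m-1) ≠ (g (⟨0, NeZero.pos n⟩ : Fin n) = true)) := fun t g => rfl
  rw [hmem, hmem]
  have hzero : sing n (⟨0, NeZero.pos n⟩ : Fin n) = ⟨0, NeZero.pos n⟩ := by
    refine sing_of_ne (by omega) ?_
    intro hc
    have := congrArg Fin.val hc
    rw [castLast_val (by omega)] at this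
    exact absurd this (by show (0:ℕ) ≠ n - 1; omega)
  have hbit : ∀ g : Fin n → Bool,
      g (sing n (⟨0, NeZero.pos n⟩ : Fin n) + ((q.val : ℕ) : Fin n)) = g q := by
    intro g
    rw [hzero, show (⟨0, NeZero.pos n⟩ : Fin n) = 0 from rfl, zero_add, Fin.cast_val_eq_self]
  rw [hbit f, hbit h]
  exact prop_xor_neq' (sing_val_ne hm3 _) (sing_val_ne hm3 _) (bool_ne_iff hq)

lemma distinguish (hm3 : 3 ≤ m) (hn3 : 3 ≤ n) (i j : Fin m) (f h : Fin n → Bool)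
    (hne : (i, f) ≠ (j, h)) :
    ∃ z : List (Fin 3),
      ((PD m n (NeZero.pos m) (NeZero.pos n)).evalFrom (i, f) z
          ∈ (PD m n (NeZero.pos m) (NeZero.pos n)).accept) ≠
      ((PD m n (NeZero.pos m) (NeZero.pos n)).evalFrom (j, h) z
          ∈ (PD m n (NeZero.pos m) (NeZero.pos n)).accept) := by
  by_cases hf : f = h
  · subst hf
    have hij : i ≠ j := by
      intro hc
      exact hne (by rw [hc])
    refine ⟨wA (m-1-i.val), ?_⟩
    rw [evalFrom_wA (by omega) (by omega), evalFrom_wA (by omega) (by omega)]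
    have htoki : i + ((m-1-i.val : ℕ) : Fin m) = ((m-1 : ℕ) : Fin m) := by
      apply Fin.ext
      rw [Fin.add_def, castFin_val, castLast_val (by omega)]
      show (i.val + (m - 1 - i.val) % m) % m = m - 1
      have := i.isLt
      rw [Nat.mod_eq_of_lt (show m-1-i.val < m by omega)]
      rw [Nat.mod_eq_of_lt (show i.val + (m-1-i.val) < m by omega)]
      omega
    have hmem : ∀ (t : Fin m) (g : Fin n → Bool),
        ((t, g) ∈ (PD m n (NeZero.pos m) (NeZero.pos n)).accept)
          = ((t.val = m-1) ≠ (g (⟨0, NeZero.pos n⟩ : Fin n) = true)) := fun t g => rfl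
    rw [hmem, hmem]
    refine prop_xor_neq ?_ ?_
    · rw [htoki, castLast_val (by omega)]
    · intro hc
      have hj : j + ((m-1-i.val:ℕ) : Fin m) = ((m-1 : ℕ) : Fin m) :=
        Fin.ext (by rw [castLast_val (by omega)]; exact hc)
      rw [← htoki] at hj
      exact hij (add_right_cancel hj).symm
  · obtain ⟨q, hq⟩ := Function.ne_iff.1 hf
    by_cases hex : ∃ p : ℕ, p % n = q.val ∧ (i + (p : Fin m)).val ≠ m - 1
        ∧ (j + (p : Fin m)).val ≠ m - 1
    · obtain ⟨p, hpq, hti, htj⟩ := hex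
      refine ⟨wA p, ?_⟩
      rw [evalFrom_wA (by omega) (by omega), evalFrom_wA (by omega) (by omega)]
      have hcastq : ((p : ℕ) : Fin n) = q := Fin.ext (by rw [castFin_val]; exact hpq)
      have hmem : ∀ (t : Fin m) (g : Fin n → Bool),
          ((t, g) ∈ (PD m n (NeZero.pos m) (NeZero.pos n)).accept)
            = ((t.val = m-1) ≠ (g (⟨0, NeZero.pos n⟩ : Fin n) = true)) := fun t g => rfl
      rw [hmem, hmem]
      have hbit : ∀ g : Fin n → Bool,
          g ((⟨0, NeZero.pos n⟩ : Fin n) + ((p:ℕ) : Fin n)) = g q := by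
        intro g
        rw [show (⟨0, NeZero.pos n⟩ : Fin n) = 0 from rfl, zero_add, hcastq]
      rw [hbit f, hbit h]
      exact prop_xor_neq' hti htj (bool_ne_iff hq)
    · push_neg at hex
      have hd := hex q.val (Nat.mod_eq_of_lt q.isLt)
      by_cases hi : (i + ((q.val : ℕ) : Fin m)).val = m - 1
      · exact distinguishC hm3 hn3 i j f h q hq hi
      · have hj : (j + ((q.val : ℕ) : Fin m)).val = m - 1 := hd hi
        obtain ⟨z, hz⟩ := distinguishC hm3 hn3 j i h f q hq.symm hj
        exact ⟨z, hz.symm⟩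

end Disting

end SCProof
namespace SCProof
open SCPaper

/-- The key result: the state complexity is exactly `m * 2^n`. -/
theorem main_result (m n : ℕ) (hm : 3 ≤ m) (hn : 3 ≤ n) (h0m : 0 < m) (h0n : 0 < n) :
    sc (lsymm (U m h0m) (rev (U n h0n))) = m * 2 ^ n := by
  haveI : NeZero m := ⟨by omega⟩
  haveI : NeZero n := ⟨by omega⟩
  have hPD : (PD m n (NeZero.pos m) (NeZero.pos n)).accepts
      = lsymm (U m h0m) (rev (U n h0n)) := PD_accepts _ _
  have hcard : Fintype.card (Fin m × (Fin n → Bool)) = m * 2 ^ n := by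
    rw [Fintype.card_prod, Fintype.card_fun, Fintype.card_fin, Fintype.card_bool,
      Fintype.card_fin]
  have hmem : m * 2 ^ n ∈ complexitySet (lsymm (U m h0m) (rev (U n h0n))) := by
    rw [← hPD]
    have := card_mem_complexitySet (PD m n (NeZero.pos m) (NeZero.pos n))
    rwa [hcard] at this
  have hlow : ∀ K ∈ complexitySet (lsymm (U m h0m) (rev (U n h0n))), m * 2 ^ n ≤ K := by
    intro K hK
    obtain ⟨M, hM⟩ := hK
    have hreach : ∀ s : Fin m × (Fin n → Bool),
        ∃ w, (PD m n (NeZero.pos m) (NeZero.pos n)).eval w = s := by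
      intro s
      obtain ⟨w, hw⟩ := reach_all hm hn s.2 s.1
      exact ⟨w, hw⟩
    choose wit hwit using hreach
    have key : ∀ (s : Fin m × (Fin n → Bool)) (z : List (Fin 3)),
        ((PD m n (NeZero.pos m) (NeZero.pos n)).evalFrom s z
          ∈ (PD m n (NeZero.pos m) (NeZero.pos n)).accept)
        ↔ M.evalFrom (M.eval (wit s)) z ∈ M.accept := by
      intro s z
      have h1 : ((PD m n (NeZero.pos m) (NeZero.pos n)).evalFrom s z
          ∈ (PD m n (NeZero.pos m) (NeZero.pos n)).accept)
          ↔ (wit s ++ z) ∈ (PD m n (NeZero.pos m) (NeZero.pos n)).accepts := by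
        rw [DFA.mem_accepts]
        show _ ↔ (PD m n (NeZero.pos m) (NeZero.pos n)).evalFrom
          (PD m n (NeZero.pos m) (NeZero.pos n)).start (wit s ++ z) ∈ _
        rw [DFA.evalFrom_of_append]
        rw [show (PD m n (NeZero.pos m) (NeZero.pos n)).evalFrom
          (PD m n (NeZero.pos m) (NeZero.pos n)).start (wit s) = s from hwit s]
      have h2 : (wit s ++ z) ∈ M.accepts ↔ M.evalFrom (M.eval (wit s)) z ∈ M.accept := by
        rw [DFA.mem_accepts]
        show M.evalFrom M.start (wit s ++ z) ∈ _ ↔ _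
        rw [DFA.evalFrom_of_append]
        rfl
      rw [h1, hPD, ← hM, h2]
    have hinj : Function.Injective
        (fun s : Fin m × (Fin n → Bool) => M.eval (wit s)) := by
      intro s₁ s₂ hval
      by_contra hne
      obtain ⟨z, hz⟩ := distinguish hm hn s₁.1 s₂.1 s₁.2 s₂.2 (by
        intro hc
        exact hne (by
          have e1 : s₁ = (s₁.1, s₁.2) := rfl
          have e2 : s₂ = (s₂.1, s₂.2) := rfl
          rw [e1, e2, hc]))
      apply hz
      rw [eq_iff_iff]
      have k1 := key (s₁.1, s₁.2) z
      have k2 := key (s₂.1, s₂.2) z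
      rw [k1, k2]
      simp only at hval ⊢
      rw [show wit (s₁.1, s₁.2) = wit s₁ from rfl, show wit (s₂.1, s₂.2) = wit s₂ from rfl,
        hval]
    have := Fintype.card_le_of_injective _ hinj
    rwa [hcard, Fintype.card_fin] at this
  refine le_antisymm (Nat.sInf_le hmem) (le_csInf ⟨_, hmem⟩ hlow)

end SCProof


open SCPaper

theorem symmdiff_one_reversed_tight (m n : ℕ) (hm : 3 ≤ m) (hn : 3 ≤ n) :
    sc (lsymm (U m (by omega)) (rev (U n (by omega)))) = m * 2 ^ n :=
  SCProof.main_result m n hm hn (by omega) (by omega)
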